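/- Coprimality criterion for primality: a finite relation S (with at least two distinct values for some attribute A, and v a value of A in S such that both σ_{A=v}(S) and σ_{A≠v}(S) are nonempty) is prime if and only if σ_{A=v}(S) and σ_{A≠v}(S) are coprime, i.e., they have no common proper-schema factor. -/
import Mathlib


open Classical

noncomputable def restrictT {α D : Type*} (V : Set α) (t : α → Option D) : α → Option D :=
  fun a => if a ∈ V then t a else none

def combineT {α D : Type*} (q r : α → Option D) : α → Option D :=
  fun a => (q a).orElse (fun _ => r a)

def prodRel {α D : Type*} (Q R : Set (α → Option D)) : Set (α → Option D) :=
  Set.image2 combineT Q R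

def IsOver {α D : Type*} (U : Set α) (t : α → Option D) : Prop :=
  ∀ a, (t a).isSome ↔ a ∈ U

def IsRelOver {α D : Type*} (U : Set α) (R : Set (α → Option D)) : Prop :=
  R.Finite ∧ ∀ t ∈ R, IsOver U t

noncomputable def projRel {α D : Type*} (V : Set α) (R : Set (α → Option D)) :
    Set (α → Option D) :=
  (restrictT V) '' R

def IsFactor {α D : Type*} (U : Set α) (R : Set (α → Option D))
    (V : Set α) (Q : Set (α → Option D)) : Prop :=
  V.Nonempty ∧ V ⊆ U ∧ IsRelOver V Q ∧
    ∃ R', IsRelOver (U \ V) R' ∧ R = prodRel Q R'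

noncomputable def prodList {α D : Type*} (L : List (Set (α → Option D))) :
    Set (α → Option D) :=
  L.foldr prodRel {fun _ => none}

def IsPrimeRel {α D : Type*} (U : Set α) (Q : Set (α → Option D)) : Prop :=
  IsRelOver U Q ∧ ∀ V P, IsFactor U Q V P → P = Q

def selEq {α D : Type*} (A : α) (v : D) (S : Set (α → Option D)) : Set (α → Option D) :=
  {t ∈ S | t A = some v}

def selNe {α D : Type*} (A : α) (v : D) (S : Set (α → Option D)) : Set (α → Option D) :=
  {t ∈ S | t A ≠ some v}

def CoprimeRel {α D : Type*} (U : Set α) (Q R : Set (α → Option D)) : Prop :=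
  ¬ ∃ (V : Set α) (P : Set (α → Option D)), V ≠ U ∧ IsFactor U Q V P ∧ IsFactor U R V P

section Aux

variable {α D : Type*}

lemma combineT_eq_left {q r : α → Option D} {a : α} (h : (q a).isSome) :
    combineT q r a = q a := by
  obtain ⟨x, hx⟩ := Option.isSome_iff_exists.mp h
  simp [combineT, hx]

lemma combineT_comm {V W : Set α} {q r : α → Option D}
    (hq : IsOver V q) (hr : IsOver W r) (hVW : Disjoint V W) :
    combineT q r = combineT r q := by
  funext a
  rcases h1 : q a with _ | x
  · rcases h2 : r a with _ | y <;> simp [combineT, h1, h2]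
  · have haV : a ∈ V := (hq a).1 (by simp [h1])
    have haW : a ∉ W := Set.disjoint_left.1 hVW haV
    have h2 : r a = none := by
      by_contra h
      exact haW ((hr a).1 (Option.isSome_iff_ne_none.2 h))
    simp [combineT, h1, h2]

lemma prodRel_comm {V W : Set α} {Q R : Set (α → Option D)}
    (hQ : ∀ q ∈ Q, IsOver V q) (hR : ∀ r ∈ R, IsOver W r) (hVW : Disjoint V W) :
    prodRel Q R = prodRel R Q := by
  rw [prodRel, prodRel, Set.image2_swap]
  exact Set.image2_congr fun r hr q hq => combineT_comm (hQ q hq) (hR r hr) hVW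

lemma sel_prodRel {A : α} {V : Set α} {Q R : Set (α → Option D)} (p : Option D → Prop)
    (hA : A ∈ V) (hQ : ∀ q ∈ Q, IsOver V q) :
    {t ∈ prodRel Q R | p (t A)} = prodRel {q ∈ Q | p (q A)} R := by
  ext t
  simp only [prodRel, Set.mem_image2, Set.mem_setOf_eq]
  constructor
  · rintro ⟨⟨q, hq, r, hr, rfl⟩, ht⟩
    have h := combineT_eq_left (q := q) (r := r) (a := A) (((hQ q hq) A).mpr hA)
    exact ⟨q, ⟨hq, by rwa [h] at ht⟩, r, hr, rfl⟩
  · rintro ⟨q, ⟨hq, hpq⟩, r, hr, rfl⟩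
    have h := combineT_eq_left (q := q) (r := r) (a := A) (((hQ q hq) A).mpr hA)
    exact ⟨⟨q, hq, r, hr, rfl⟩, by rwa [h]⟩

end Aux

theorem stmt_5 {α D : Type*} (U : Set α) (hUfin : U.Finite) (hU2 : 2 ≤ U.ncard)
    (S : Set (α → Option D)) (hS : IsRelOver U S)
    (A : α) (hA : A ∈ U) (v : D)
    (h1 : (selEq A v S).Nonempty) (h2 : (selNe A v S).Nonempty) :
    (∀ V Q, IsFactor U S V Q → V = U) ↔
      CoprimeRel U (selEq A v S) (selNe A v S) := by
  constructor
  · intro hprime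
    rintro ⟨V, P, hVU, ⟨hVne, hVsub, hP, R1, hR1, hEq1⟩, ⟨_, _, _, R2, hR2, hEq2⟩⟩
    have hSunion : S = selEq A v S ∪ selNe A v S := by
      ext t
      constructor
      · intro ht
        by_cases h : t A = some v
        · exact Or.inl ⟨ht, h⟩
        · exact Or.inr ⟨ht, h⟩
      · rintro (⟨ht, _⟩ | ⟨ht, _⟩) <;> exact ht
    have hfac : IsFactor U S V P := by
      refine ⟨hVne, hVsub, hP, R1 ∪ R2, ⟨hR1.1.union hR2.1, ?_⟩, ?_⟩
      · rintro t (ht | ht)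
        exacts [hR1.2 t ht, hR2.2 t ht]
      · rw [hSunion, hEq1, hEq2, prodRel, prodRel, prodRel, Set.image2_union_right]
    exact hVU (hprime V P hfac)
  · intro hcop V Q hfac
    by_contra hVU
    obtain ⟨hVne, hVsub, hQ, R', hR', hSeq⟩ := hfac
    have hdisj : Disjoint V (U \ V) := Set.disjoint_sdiff_right
    have hdiffV : U \ (U \ V) = V := Set.diff_diff_cancel_left hVsub
    by_cases hAV : A ∈ V
    · -- common factor (U \ V, R') of the two selections
      apply hcop
      have hUVne : (U \ V).Nonempty := by
        rw [Set.diff_nonempty]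
        intro h
        exact hVU (le_antisymm hVsub h)
      have hUVneU : U \ V ≠ U := by
        obtain ⟨x, hxV⟩ := hVne
        intro h
        have : x ∈ U \ V := h.symm ▸ hVsub hxV
        exact this.2 hxV
      have key : ∀ p : Option D → Prop,
          {t ∈ S | p (t A)} = prodRel R' {q ∈ Q | p (q A)} := by
        intro p
        rw [hSeq, sel_prodRel p hAV hQ.2]
        exact prodRel_comm (fun q hq => hQ.2 q hq.1) hR'.2 hdisj
      refine ⟨U \ V, R', hUVneU, ?_, ?_⟩
      · refine ⟨hUVne, Set.diff_subset, hR', {q ∈ Q | q A = some v}, ?_, ?_⟩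
        · rw [hdiffV]
          exact ⟨hQ.1.subset (Set.sep_subset _ _), fun t ht => hQ.2 t ht.1⟩
        · exact key (· = some v)
      · refine ⟨hUVne, Set.diff_subset, hR', {q ∈ Q | q A ≠ some v}, ?_, ?_⟩
        · rw [hdiffV]
          exact ⟨hQ.1.subset (Set.sep_subset _ _), fun t ht => hQ.2 t ht.1⟩
        · exact key (· ≠ some v)
    · -- A ∈ U \ V; common factor (V, Q) of the two selections
      have hAUV : A ∈ U \ V := ⟨hA, hAV⟩
      apply hcop
      have key : ∀ p : Option D → Prop,
          {t ∈ S | p (t A)} = prodRel Q {r ∈ R' | p (r A)} := by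
        intro p
        rw [hSeq, prodRel_comm hQ.2 hR'.2 hdisj, sel_prodRel p hAUV hR'.2]
        exact prodRel_comm (fun r hr => hR'.2 r hr.1) hQ.2 hdisj.symm
      refine ⟨V, Q, hVU, ?_, ?_⟩
      · refine ⟨hVne, hVsub, hQ, {r ∈ R' | r A = some v}, ?_, ?_⟩
        · exact ⟨hR'.1.subset (Set.sep_subset _ _), fun t ht => hR'.2 t ht.1⟩
        · exact key (· = some v)
      · refine ⟨hVne, hVsub, hQ, {r ∈ R' | r A ≠ some v}, ?_, ?_⟩
        · exact ⟨hR'.1.subset (Set.sep_subset _ _), fun t ht => hR'.2 t ht.1⟩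
        · exact key (· ≠ some v)
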